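/- (Duality representation of the L² norm) Let Ω = (a,b), β ≠ 0 constant, and H₊(Ω) = { v ∈ H¹(Ω) : v = 0 at the outflow endpoint }. Then for every w ∈ L²(Ω), ‖w‖_{L²(Ω)} = sup over z ∈ H₊(Ω), z ≠ 0, of ( -∫_Ω w (β z') ) / ‖β z'‖_{L²(Ω)}. -/

import Mathlib

open MeasureTheory Set intervalIntegral

/-- The `L²` norm of `f` over the set `s ⊆ ℝ`. -/
noncomputable def L2N (f : ℝ → ℝ) (s : Set ℝ) : ℝ :=
  (eLpNorm f 2 (volume.restrict s)).toReal

/-- `v` belongs to `H¹(a,b)` with weak derivative `v'` : the derivative is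
square-integrable (hence integrable) on `(a,b)` and `v` is the primitive of `v'`
(continuous representative). -/
def IsH1 (a b : ℝ) (v v' : ℝ → ℝ) : Prop :=
  MemLp v' 2 (volume.restrict (Ioo a b)) ∧
  IntervalIntegrable v' volume a b ∧
  ∀ x ∈ Icc a b, v x = v a + ∫ t in a..x, v' t

open Metric Filter RealInnerProductSpace


lemma integral_mul_le_L2 {μ : Measure ℝ} {f g : ℝ → ℝ} (hf : MemLp f 2 μ) (hg : MemLp g 2 μ) :
    |∫ x, f x * g x ∂μ| ≤ (eLpNorm f 2 μ).toReal * (eLpNorm g 2 μ).toReal := by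
  have h1 : ∫ x, f x * g x ∂μ = ⟪hf.toLp f, hg.toLp g⟫ := by
    rw [MeasureTheory.L2.inner_def]
    refine integral_congr_ae ?_
    filter_upwards [hf.coeFn_toLp, hg.coeFn_toLp] with x hx hy
    simp [hx, hy, RCLike.inner_apply]; ring
  rw [h1, ← Lp.norm_toLp f hf, ← Lp.norm_toLp g hg]
  exact abs_real_inner_le_norm _ _

lemma integral_mul_self_L2 {μ : Measure ℝ} {f : ℝ → ℝ} (hf : MemLp f 2 μ) :
    ∫ x, f x * f x ∂μ = ((eLpNorm f 2 μ).toReal)^2 := by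
  have h1 : ∫ x, f x * f x ∂μ = ⟪hf.toLp f, hf.toLp f⟫ := by
    rw [MeasureTheory.L2.inner_def]
    refine integral_congr_ae ?_
    filter_upwards [hf.coeFn_toLp] with x hx
    simp [hx, RCLike.inner_apply]; ring
  rw [h1, real_inner_self_eq_norm_sq, Lp.norm_toLp]

lemma ae_zero_of_primitive_zero {a b : ℝ} (hab : a < b) {f : ℝ → ℝ}
    (hf : IntervalIntegrable f volume a b)
    (h : ∀ x ∈ Icc a b, (∫ t in a..x, f t) = 0) :
    f =ᵐ[volume.restrict (Ioo a b)] 0 := by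
  set g : ℝ → ℝ := (Ioo a b).indicator f with hg
  have hfIoo : IntegrableOn f (Ioo a b) volume := by
    rw [intervalIntegrable_iff_integrableOn_Ioc_of_le hab.le] at hf
    exact hf.mono_set Ioo_subset_Ioc_self
  have hgint : Integrable g volume := hfIoo.integrable_indicator measurableSet_Ioo
  have hloc : LocallyIntegrable g volume := hgint.locallyIntegrable
  have key := IsUnifLocDoublingMeasure.ae_tendsto_average (μ := (volume : Measure ℝ)) hloc 1
  refine (ae_restrict_iff' measurableSet_Ioo).mpr ?_
  filter_upwards [key] with x hx hxm
  show f x = 0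
  have hten : Tendsto (fun r : ℝ => ⨍ y in closedBall x r, g y) (nhdsWithin 0 (Ioi 0)) (nhds (g x)) := by
    refine hx (fun _ => x) id tendsto_id ?_
    filter_upwards [self_mem_nhdsWithin] with r (hr : (0:ℝ) < r)
    simp [Metric.mem_closedBall, hr.le]
  have hzero : ∀ᶠ r in nhdsWithin (0:ℝ) (Ioi 0),
      (⨍ y in closedBall x r, g y) = 0 := by
    have hmem : Ioo (0:ℝ) (min (x - a) (b - x)) ∈ nhdsWithin (0:ℝ) (Ioi 0) := by
      refine Ioo_mem_nhdsGT_of_mem ⟨le_refl _, ?_⟩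
      exact lt_min (by linarith [hxm.1]) (by linarith [hxm.2])
    filter_upwards [hmem] with r hr
    obtain ⟨hr0, hrlt⟩ := hr
    have h1 : a < x - r := by
      have := lt_of_lt_of_le hrlt (min_le_left _ _); linarith
    have h2 : x + r < b := by
      have := lt_of_lt_of_le hrlt (min_le_right _ _); linarith
    have hsub : closedBall x r ⊆ Ioo a b := by
      intro y hy
      rw [Metric.mem_closedBall, Real.dist_eq, abs_le] at hy
      constructor <;> [linarith [hy.1]; linarith [hy.2]]
    have hint0 : ∫ y in closedBall x r, g y = 0 := by
      rw [hg, setIntegral_indicator measurableSet_Ioo,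
        inter_eq_left.mpr hsub]
      have hcb : closedBall x r = Icc (x - r) (x + r) := Real.closedBall_eq_Icc
      rw [hcb]
      have : ∫ y in Icc (x - r) (x + r), f y = ∫ y in Ioc (x - r) (x + r), f y := by
        rw [Measure.restrict_congr_set Ioc_ae_eq_Icc]
      rw [this, ← intervalIntegral.integral_of_le (by linarith)]
      have hi1 : IntervalIntegrable f volume a (x + r) :=
        hf.mono_set (by rw [uIcc_of_le (by linarith), uIcc_of_le hab.le]; exact Icc_subset_Icc le_rfl h2.le)
      have hi2 : IntervalIntegrable f volume a (x - r) :=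
        hf.mono_set (by rw [uIcc_of_le (by linarith), uIcc_of_le hab.le]; exact Icc_subset_Icc le_rfl (by linarith))
      have := intervalIntegral.integral_interval_sub_left hi1 hi2
      rw [← this, h (x + r) ⟨by linarith, h2.le⟩, h (x - r) ⟨by linarith, by linarith⟩]
      ring
    rw [setAverage_eq, hint0, smul_zero]
  have h0 : Tendsto (fun r : ℝ => ⨍ y in closedBall x r, g y) (nhdsWithin 0 (Ioi 0)) (nhds 0) :=
    Tendsto.congr' (hzero.mono fun r hr => hr.symm) tendsto_const_nhds
  have : g x = 0 := tendsto_nhds_unique hten h0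
  rwa [hg, indicator_of_mem hxm] at this


/-- duality representation of the `L²` norm: for `w ∈ L²(a,b)`,
`‖w‖_{L²} = sup { (-∫ w (β z')) / ‖β z'‖ : z ∈ H₊(Ω), z ≠ 0 }`. -/
theorem l2_norm_duality (a b β : ℝ) (hab : a < b) (hβ : β ≠ 0) (w : ℝ → ℝ)
    (hw : MemLp w 2 (volume.restrict (Ioo a b))) :
    IsLUB {r : ℝ | ∃ z z' : ℝ → ℝ, IsH1 a b z z' ∧
        z (if 0 < β then b else a) = 0 ∧ ¬ Set.EqOn z 0 (Icc a b) ∧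
        r = (-(∫ x in a..b, w x * (β * z' x))) / L2N (fun x => β * z' x) (Ioo a b)}
      (L2N w (Ioo a b)) := by
  set μ := volume.restrict (Ioo a b) with hμ
  haveI : IsFiniteMeasure μ := by
    refine ⟨?_⟩
    rw [hμ, Measure.restrict_apply_univ, Real.volume_Ioo]
    exact ENNReal.ofReal_lt_top
  have hμIoc : volume.restrict (Ioo a b) = volume.restrict (Ioc a b) :=
    Measure.restrict_congr_set Ioo_ae_eq_Ioc
  have hIcc : ∀ (f : ℝ → ℝ), (∫ x in a..b, f x) = ∫ x, f x ∂μ := by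
    intro f
    rw [intervalIntegral.integral_of_le hab.le, hμ, hμIoc]
  set c : ℝ := if 0 < β then b else a with hc
  have hcmem : c ∈ Icc a b := by
    rw [hc]; split <;> simp [hab.le]
  -- membership
  refine IsGreatest.isLUB ⟨?_, ?_⟩
  · show L2N w (Ioo a b) ∈ _
    by_cases h0 : eLpNorm w 2 μ = 0
    · -- w = 0 a.e.
      have hw0 : w =ᵐ[μ] 0 := (eLpNorm_eq_zero_iff hw.1 (by norm_num)).mp h0
      refine ⟨fun x => x - c, fun _ => 1, ⟨memLp_const 1, intervalIntegrable_const, ?_⟩,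
        by simp, ?_, ?_⟩
      · intro x hx; simp
      · intro hEq
        have ha := hEq (left_mem_Icc.mpr hab.le)
        have hb := hEq (right_mem_Icc.mpr hab.le)
        simp only [Pi.zero_apply, sub_eq_zero] at ha hb
        exact hab.ne (ha.trans hb.symm)
      · have hnum : (∫ x in a..b, w x * (β * 1)) = 0 := by
          rw [hIcc]
          have he : (fun x => w x * (β * 1)) =ᵐ[μ] 0 := by
            filter_upwards [hw0] with x hx
            simp [hx]
          rw [integral_congr_ae he]; simp
        have hL : L2N w (Ioo a b) = 0 := by
          simp only [L2N, ← hμ, h0, ENNReal.toReal_zero]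
        rw [hnum, hL, neg_zero, zero_div]
    · -- w not a.e. zero
      set z' : ℝ → ℝ := fun x => -w x / β with hz'def
      have hz'w : ∀ x, β * z' x = -w x := fun x => by
        rw [hz'def]; field_simp
      have hz'2 : MemLp z' 2 μ := by
        have he : z' = fun x => (-β⁻¹) * w x := by
          funext x; rw [hz'def]; field_simp
        rw [he]; exact hw.const_mul _
      have hz'int : IntervalIntegrable z' volume a b := by
        rw [intervalIntegrable_iff_integrableOn_Ioc_of_le hab.le]
        have hin : Integrable z' μ := hz'2.integrable (by norm_num)
        rwa [hμ, hμIoc] at hin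
      have hmono : ∀ x ∈ Icc a b, ∀ y ∈ Icc a b, IntervalIntegrable z' volume x y := by
        intro x hx y hy
        refine hz'int.mono_set (uIcc_subset_uIcc ?_ ?_) <;>
          rwa [uIcc_of_le hab.le]
      set z : ℝ → ℝ := fun x => ∫ t in c..x, z' t with hzdef
      refine ⟨z, z', ⟨hz'2, hz'int, ?_⟩, by simp [hzdef], ?_, ?_⟩
      · intro x hx
        have := intervalIntegral.integral_add_adjacent_intervals
          (hmono c hcmem a (left_mem_Icc.mpr hab.le)) (hmono a (left_mem_Icc.mpr hab.le) x hx)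
        simp only [hzdef]
        rw [← this]
      · intro hEq
        have hza : z a = 0 := hEq (left_mem_Icc.mpr hab.le)
        have hprim : ∀ x ∈ Icc a b, (∫ t in a..x, z' t) = 0 := by
          intro x hx
          have h1 := intervalIntegral.integral_add_adjacent_intervals
            (hmono c hcmem a (left_mem_Icc.mpr hab.le)) (hmono a (left_mem_Icc.mpr hab.le) x hx)
          have h2 : z x = 0 := hEq hx
          simp only [hzdef] at hza h2
          rw [← h1, hza, zero_add] at h2
          exact h2
        have hz'0 : z' =ᵐ[volume.restrict (Ioo a b)] 0 :=
          ae_zero_of_primitive_zero hab hz'int hprim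
        have hw0 : w =ᵐ[μ] 0 := by
          rw [hμ]
          filter_upwards [hz'0] with x hx
          simp only [Pi.zero_apply] at hx
          have h1 : -w x = 0 := by rw [← hz'w x, hx, mul_zero]
          simpa using neg_eq_zero.mp h1
        exact h0 (by rw [eLpNorm_congr_ae hw0, eLpNorm_zero])
      · have hfun : (fun x => β * z' x) = fun x => -w x := funext hz'w
        have hden : L2N (fun x => β * z' x) (Ioo a b) = L2N w (Ioo a b) := by
          rw [hfun]
          simp only [L2N]
          congr 1
          exact eLpNorm_neg (f := w) (p := 2) (μ := volume.restrict (Ioo a b))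
        have hnum : (∫ x in a..b, w x * (β * z' x)) = -(L2N w (Ioo a b))^2 := by
          have he : ∀ x, w x * (β * z' x) = -(w x * w x) := by
            intro x; rw [hz'w x]; ring
          simp only [he]
          rw [hIcc, MeasureTheory.integral_neg, integral_mul_self_L2 hw]
          rfl
        have hL : L2N w (Ioo a b) ≠ 0 := by
          simp only [L2N, ← hμ]
          rw [ENNReal.toReal_ne_zero]
          exact ⟨h0, hw.2.ne⟩
        rw [hnum, hden, neg_neg, pow_two, mul_div_assoc, div_self hL, mul_one]
  · -- upper bound
    intro r hr
    obtain ⟨z, z', ⟨hz2, hzi, hzrepr⟩, hzc, hzne, rfl⟩ := hr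
    set g : ℝ → ℝ := fun x => β * z' x with hgdef
    have hg2 : MemLp g 2 μ := hz2.const_mul β
    have hnum : (∫ x in a..b, w x * (β * z' x)) = ∫ x, w x * g x ∂μ := hIcc _
    have hCS := integral_mul_le_L2 (μ := μ) hw hg2
    have hden : L2N (fun x => β * z' x) (Ioo a b) = (eLpNorm g 2 μ).toReal := rfl
    rw [hnum, hden]
    rcases eq_or_lt_of_le (ENNReal.toReal_nonneg : (0:ℝ) ≤ (eLpNorm g 2 μ).toReal) with h0 | h0
    · rw [← h0, div_zero]
      exact ENNReal.toReal_nonneg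
    · rw [div_le_iff₀ h0]
      calc -(∫ x, w x * g x ∂μ) ≤ |∫ x, w x * g x ∂μ| := neg_le_abs _
        _ ≤ (eLpNorm w 2 μ).toReal * (eLpNorm g 2 μ).toReal := hCS
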